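/- Define F_λ(α, θ) = b^{−λ} Σ_{0 ≤ n < b^λ} e(α R_λ(n) − θ n), where e(x) = exp(2πix). Then for any integer λ ≥ 1 and real α, θ, |F_λ(α, θ)| = Π_{j=0}^{λ−1} |K_b(α b^{λ−1−j} − θ b^j)|, where K_b(x) = sin(πbx)/(b sin(πx)) extended continuously to integers. -/

import Mathlib

/-- The `j`-th digit of `n` in base `b`. -/
def digit (b n j : ℕ) : ℕ := n / b ^ j % b

/-- The reverse of the `L` first digits of `n` in base `b`. -/
def rev (b L n : ℕ) : ℕ := ∑ j ∈ Finset.range L, digit b n j * b ^ (L - 1 - j)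

/-- The exponential sum `F_λ(α,θ) = b^{-λ} ∑_{0 ≤ n < b^λ} e(α R_λ(n) - θ n)`. -/
noncomputable def Fl (b L : ℕ) (α θ : ℝ) : ℂ :=
  (1 / (b : ℂ) ^ L) * ∑ n ∈ Finset.range (b ^ L),
    Complex.exp (2 * Real.pi * Complex.I * ((α * (rev b L n : ℝ) - θ * n : ℝ) : ℂ))

open Classical
noncomputable def Kb (b : ℕ) (x : ℝ) : ℝ :=
  if ∃ n : ℤ, x = n then (-1 : ℝ) ^ (⌊x⌋ * ((b : ℤ) - 1))
  else Real.sin (Real.pi * b * x) / (b * Real.sin (Real.pi * x))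

noncomputable def E (t : ℝ) : ℂ := Complex.exp (2 * Real.pi * Complex.I * (t : ℂ))

lemma E_add (s t : ℝ) : E (s + t) = E s * E t := by
  rw [E, E, E, ← Complex.exp_add]; push_cast; ring_nf

lemma E_nat_mul (t : ℝ) (n : ℕ) : E ((n : ℝ) * t) = E t ^ n := by
  rw [E, E, ← Complex.exp_nat_mul]; congr 1; push_cast; ring

lemma E_int (n : ℤ) : E (n : ℝ) = 1 := by
  rw [E, show (2 * (Real.pi:ℂ) * Complex.I * ((n:ℝ):ℂ)) = (n:ℤ) * (2 * Real.pi * Complex.I) by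
    push_cast; ring]
  exact Complex.exp_int_mul_two_pi_mul_I n

lemma E_eq_one_iff (t : ℝ) : E t = 1 ↔ ∃ n : ℤ, t = (n : ℝ) := by
  rw [E, Complex.exp_eq_one_iff]
  constructor
  · rintro ⟨n, hn⟩
    refine ⟨n, ?_⟩
    have hπ : (Real.pi : ℂ) ≠ 0 := by exact_mod_cast Real.pi_ne_zero
    have h' : (2*(Real.pi:ℂ)*Complex.I) * (t:ℂ) = (2*(Real.pi:ℂ)*Complex.I) * (n:ℂ) := by
      push_cast at hn ⊢; linear_combination hn
    have h2 : (2*(Real.pi:ℂ)*Complex.I) ≠ 0 :=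
      mul_ne_zero (mul_ne_zero two_ne_zero hπ) Complex.I_ne_zero
    have : (t : ℂ) = (n : ℂ) := mul_left_cancel₀ h2 h'
    exact_mod_cast this
  · rintro ⟨n, rfl⟩
    exact ⟨n, by push_cast; ring⟩

lemma abs_E_sub_one (y : ℝ) : ‖E y - 1‖ = 2 * |Real.sin (Real.pi * y)| := by
  have h : E y - 1 = Complex.exp (((Real.pi * y : ℝ) : ℂ) * Complex.I) *
      (2 * Complex.I * Complex.sin ((Real.pi * y : ℝ) : ℂ)) := by
    rw [Complex.sin, E]
    have h1 : Complex.exp (((Real.pi * y : ℝ) : ℂ) * Complex.I) *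
        Complex.exp (((Real.pi * y : ℝ) : ℂ) * Complex.I) =
        Complex.exp (2 * Real.pi * Complex.I * (y : ℂ)) := by
      rw [← Complex.exp_add]; congr 1; push_cast; ring
    have h2 : Complex.exp (((Real.pi * y : ℝ) : ℂ) * Complex.I) *
        Complex.exp (-((Real.pi * y : ℝ) : ℂ) * Complex.I) = 1 := by
      rw [← Complex.exp_add, show (((Real.pi * y : ℝ) : ℂ) * Complex.I +
        -((Real.pi * y : ℝ) : ℂ) * Complex.I) = 0 by ring, Complex.exp_zero]
    have hI : Complex.I * Complex.I = -1 := Complex.I_mul_I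
    linear_combination (-1 : ℂ) * h1 + (-(Complex.I*Complex.I)) * h2 +
      (Complex.exp (((Real.pi * y : ℝ) : ℂ) * Complex.I) *
        Complex.exp (((Real.pi * y : ℝ) : ℂ) * Complex.I) - 1) * hI
  rw [h, norm_mul, Complex.norm_exp_ofReal_mul_I, one_mul, ← Complex.ofReal_sin, norm_mul,
    norm_mul, Complex.norm_two, Complex.norm_I, Complex.norm_real, Real.norm_eq_abs, mul_one]

lemma abs_sum_E (b : ℕ) (hb : 2 ≤ b) (x : ℝ) :
    ‖∑ r ∈ Finset.range b, E (x * r)‖ = b * |Kb b x| := by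
  have hb0 : (0:ℝ) < b := by positivity
  have hterm : ∀ r : ℕ, E (x * r) = E x ^ r := fun r => by
    rw [show x * (r:ℝ) = (r:ℝ) * x by ring, E_nat_mul]
  rw [Finset.sum_congr rfl fun r _ => hterm r]
  by_cases h : ∃ n : ℤ, x = n
  · obtain ⟨n, rfl⟩ := h
    rw [E_int]
    simp only [one_pow, Finset.sum_const, Finset.card_range, nsmul_eq_mul, mul_one]
    rw [Kb, if_pos ⟨n, rfl⟩]
    have h1 : |(-1 : ℝ) ^ (⌊(n:ℝ)⌋ * ((b:ℤ) - 1))| = 1 := by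
      rcases Int.even_or_odd (⌊(n:ℝ)⌋ * ((b:ℤ) - 1)) with he | ho
      · rw [he.neg_one_zpow, abs_one]
      · rw [ho.neg_one_zpow, abs_neg, abs_one]
    rw [h1, mul_one, Complex.norm_natCast]
  · have hz : E x ≠ 1 := fun he => h ((E_eq_one_iff x).mp he)
    rw [geom_sum_eq hz]
    have hpow : E x ^ b = E ((b:ℝ) * x) := (E_nat_mul x b).symm
    have hsin : Real.sin (Real.pi * x) ≠ 0 := by
      intro hs
      rw [Real.sin_eq_zero_iff] at hs
      obtain ⟨n, hn⟩ := hs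
      refine h ⟨n, ?_⟩
      have hπ := Real.pi_ne_zero
      have : Real.pi * x = Real.pi * (n:ℝ) := by linarith [hn]
      exact (mul_left_cancel₀ hπ this).symm ▸ rfl
    rw [norm_div, hpow, abs_E_sub_one, abs_E_sub_one, Kb, if_neg h]
    have habs : |Real.sin (Real.pi * x)| ≠ 0 := abs_ne_zero.mpr hsin
    rw [show Real.pi * ((b:ℝ) * x) = Real.pi * (b:ℝ) * x by ring, abs_div, abs_mul,
      Nat.abs_cast]
    have hbne : (b:ℝ) ≠ 0 := ne_of_gt hb0
    field_simp

lemma sum_range_mul {M : Type*} [AddCommMonoid M] (f : ℕ → M) (b B : ℕ) :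
    ∑ n ∈ Finset.range (b * B), f n =
      ∑ q ∈ Finset.range B, ∑ r ∈ Finset.range b, f (b * q + r) := by
  induction B with
  | zero => simp
  | succ B ih =>
    rw [Nat.mul_succ, Finset.sum_range_add, ih, Finset.sum_range_succ]

lemma digit_succ' (b q r j : ℕ) (hb : 0 < b) (hr : r < b) :
    digit b (b * q + r) (j + 1) = digit b q j := by
  unfold digit
  rw [pow_succ, mul_comm (b ^ j) b, ← Nat.div_div_eq_div_mul,
    Nat.mul_add_div hb, Nat.div_eq_of_lt hr, add_zero]

lemma rev_succ' (b M q r : ℕ) (hb : 0 < b) (hr : r < b) :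
    rev b (M + 1) (b * q + r) = r * b ^ M + rev b M q := by
  unfold rev
  rw [Finset.sum_range_succ', add_comm (r * b ^ M)]
  congr 1
  · refine Finset.sum_congr rfl fun j hj => ?_
    rw [digit_succ' b q r j hb hr, show M + 1 - 1 - (j + 1) = M - 1 - j from by omega]
  · unfold digit
    rw [pow_zero, Nat.div_one, Nat.mul_add_mod, Nat.mod_eq_of_lt hr,
      show M + 1 - 1 - 0 = M from by omega]

lemma Fl_eq_E (b L : ℕ) (α θ : ℝ) :
    Fl b L α θ = (1 / (b : ℂ) ^ L) * ∑ n ∈ Finset.range (b ^ L),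
      E (α * (rev b L n : ℝ) - θ * n) := rfl

lemma key (b : ℕ) (hb : 2 ≤ b) (α : ℝ) : ∀ L θ, ‖Fl b L α θ‖ =
    ∏ j ∈ Finset.range L, |Kb b (α * (b : ℝ) ^ (L - 1 - j) - θ * (b : ℝ) ^ j)| := by
  have hb0 : 0 < b := by omega
  have hbne : (b:ℂ) ≠ 0 := Nat.cast_ne_zero.mpr (by omega)
  intro L
  induction L with
  | zero =>
    intro θ
    simp [Fl_eq_E, rev, E]
  | succ M ih =>
    intro θ
    have hsplit : Fl b (M+1) α θ =
        ((1/(b:ℂ)) * ∑ r ∈ Finset.range b, E ((α * (b:ℝ)^M - θ) * r)) * Fl b M α (b*θ) := by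
      rw [Fl_eq_E, Fl_eq_E, show b ^ (M+1) = b * b ^ M from by rw [pow_succ, mul_comm]]
      rw [sum_range_mul]
      have hterm : ∀ q ∈ Finset.range (b^M), ∀ r ∈ Finset.range b,
          E (α * (rev b (M+1) (b*q+r) : ℝ) - θ * ((b*q+r : ℕ) : ℝ)) =
          E ((α*(b:ℝ)^M - θ) * r) * E (α * (rev b M q : ℝ) - ((b:ℝ)*θ) * q) := by
        intro q hq r hr
        rw [rev_succ' b M q r hb0 (Finset.mem_range.mp hr), ← E_add]
        congr 1
        push_cast
        ring
      rw [Finset.sum_congr rfl fun q hq => Finset.sum_congr rfl fun r hr => hterm q hq r hr]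
      have : ∑ q ∈ Finset.range (b^M), ∑ r ∈ Finset.range b,
          E ((α*(b:ℝ)^M - θ) * r) * E (α * (rev b M q : ℝ) - ((b:ℝ)*θ) * q) =
          (∑ r ∈ Finset.range b, E ((α*(b:ℝ)^M - θ) * r)) *
          (∑ q ∈ Finset.range (b^M), E (α * (rev b M q : ℝ) - ((b:ℝ)*θ) * q)) := by
        rw [Finset.mul_sum]
        refine Finset.sum_congr rfl fun q hq => ?_
        rw [Finset.sum_mul]
      rw [this]
      have hpow : (1 : ℂ) / (b:ℂ) ^ (M+1) = (1/(b:ℂ)) * (1/(b:ℂ)^M) := by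
        rw [pow_succ]; field_simp
      rw [hpow]
      push_cast
      ring
    rw [hsplit, norm_mul, norm_mul, ih (b*θ)]
    have h1 : ‖(1/(b:ℂ))‖ = 1/(b:ℝ) := by
      rw [norm_div, norm_one, Complex.norm_natCast]
    rw [h1, abs_sum_E b hb (α * (b:ℝ)^M - θ)]
    rw [Finset.prod_range_succ']
    have h2 : ∀ j ∈ Finset.range M,
        |Kb b (α * (b:ℝ) ^ (M + 1 - 1 - (j+1)) - θ * (b:ℝ) ^ (j+1))| =
        |Kb b (α * (b:ℝ) ^ (M - 1 - j) - (b:ℝ)*θ * (b:ℝ) ^ j)| := by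
      intro j hj
      congr 2
      rw [show M + 1 - 1 - (j + 1) = M - 1 - j from by omega, pow_succ]
      ring
    rw [Finset.prod_congr rfl h2]
    have hbR : ((b:ℝ)) ≠ 0 := by positivity
    rw [show M + 1 - 1 - 0 = M from by omega, pow_zero, mul_one]
    field_simp

theorem stmt12 (b L : ℕ) (hb : 2 ≤ b) (hL : 1 ≤ L) (α θ : ℝ) :
    ‖Fl b L α θ‖ =
      ∏ j ∈ Finset.range L, |Kb b (α * (b : ℝ) ^ (L - 1 - j) - θ * (b : ℝ) ^ j)| := by
  exact key b hb α L θ
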